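/- Let φ : S → Hom(H, H') be a norm-continuous family of bounded linear maps between Hilbert spaces such that φ(x) is surjective for every x ∈ S. Then the family of kernels ker(φ(x)) forms a Hilbert vector bundle over S; i.e., locally on S, there are continuous trivializations identifying the kernels with a fixed closed subspace. -/

import Mathlib

open Set Topology Function

/-- For a norm-continuous family `φ` of surjective bounded linear maps between Hilbert
spaces, the kernels `ker (φ x)` form a Hilbert vector bundle: locally on `S` there are
continuous (in the operator norm) families of linear automorphisms of `H` carrying the
fixed closed subspace `ker (φ x₀)` onto `ker (φ x)`. -/
theorem stmt_11 {S : Type*} [TopologicalSpace S]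
    {H H' : Type*} [NormedAddCommGroup H] [InnerProductSpace ℝ H] [CompleteSpace H]
    [NormedAddCommGroup H'] [InnerProductSpace ℝ H'] [CompleteSpace H']
    (φ : S → H →L[ℝ] H') (hφ : Continuous φ) (hsurj : ∀ x, Surjective (φ x)) :
    ∀ x₀ : S, ∃ U ∈ 𝓝 x₀, ∃ T : S → (H ≃L[ℝ] H),
      ContinuousOn (fun x => (T x : H →L[ℝ] H)) U ∧
      ContinuousOn (fun x => ((T x).symm : H →L[ℝ] H)) U ∧
      ∀ x ∈ U, Submodule.map ((T x : H →L[ℝ] H) : H →ₗ[ℝ] H) (LinearMap.ker (φ x₀ : H →ₗ[ℝ] H')) =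
        LinearMap.ker (φ x : H →ₗ[ℝ] H') := by
  intro x₀
  classical
  set K : Submodule ℝ H := LinearMap.ker (φ x₀ : H →ₗ[ℝ] H') with hK
  haveI : CompleteSpace K := (ContinuousLinearMap.isClosed_ker (φ x₀)).completeSpace_coe
  set P : H →L[ℝ] K := K.orthogonalProjection with hP
  set Ψ : S → (H →L[ℝ] H' × K) := fun x => (φ x).prod P with hΨ
  have hΨcont : Continuous Ψ := by
    have : Ψ = fun x => ContinuousLinearMap.prodₗᵢ ℝ (φ x, P) := rfl
    rw [this]
    exact (ContinuousLinearMap.prodₗᵢ ℝ (E := H) (F := H') (G := K)).continuous.comp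
      (hφ.prodMk continuous_const)
  have hker : LinearMap.ker (Ψ x₀ : H →ₗ[ℝ] H' × K) = ⊥ := by
    rw [LinearMap.ker_eq_bot']
    intro h hh
    have h1 : φ x₀ h = 0 := congrArg Prod.fst hh
    have h2 : (P h : H) = h := Submodule.starProjection_eq_self_iff.mpr h1
    have h3 : P h = 0 := congrArg Prod.snd hh
    rw [h3] at h2
    simpa using h2.symm
  have hrange : LinearMap.range (Ψ x₀ : H →ₗ[ℝ] H' × K) = ⊤ := by
    rw [LinearMap.range_eq_top]
    rintro ⟨h', k⟩
    obtain ⟨u, hu⟩ := hsurj x₀ h'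
    refine ⟨u + ((k : H) - (P u : H)), ?_⟩
    have hk : ((k : H) - (P u : H)) ∈ K := K.sub_mem k.2 (P u).2
    have hφu : φ x₀ ((k : H) - (P u : H)) = 0 := hk
    have hPk : P ((k : H) - (P u : H)) = ⟨(k : H) - (P u : H), hk⟩ :=
      Subtype.ext (Submodule.starProjection_eq_self_iff.mpr hk)
    refine Prod.ext ?_ ?_
    · simp [hΨ, hu, hφu]
    · apply Subtype.ext
      simp [hΨ, hPk]
  set e₀ : H ≃L[ℝ] H' × K := ContinuousLinearEquiv.ofBijective (Ψ x₀) hker hrange with he₀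
  have he₀coe : (e₀ : H →L[ℝ] H' × K) = Ψ x₀ := rfl
  set Ψ' : S → (H →L[ℝ] H) := fun x => (e₀.symm : H' × K →L[ℝ] H).comp (Ψ x) with hΨ'
  have hΨ'cont : Continuous Ψ' :=
    ((ContinuousLinearMap.compL ℝ H (H' × K) H (e₀.symm : H' × K →L[ℝ] H)).continuous).comp hΨcont
  have hunit₀ : IsUnit (Ψ' x₀) := by
    have : Ψ' x₀ = 1 := by
      ext h
      exact e₀.symm_apply_apply h
    rw [this]; exact isUnit_one
  set U : Set S := Ψ' ⁻¹' {f | IsUnit f} with hU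
  have hUopen : IsOpen U := Units.isOpen.preimage hΨ'cont
  have hUmem : U ∈ 𝓝 x₀ := hUopen.mem_nhds hunit₀
  set T : S → (H ≃L[ℝ] H) := fun x =>
    if h : IsUnit (Ψ' x) then (ContinuousLinearEquiv.unitsEquiv ℝ H h.unit).symm
    else ContinuousLinearEquiv.refl ℝ H with hT
  have hTcoe : ∀ x ∈ U, (T x : H →L[ℝ] H) = Ring.inverse (Ψ' x) := by
    intro x hx
    have hx' : IsUnit (Ψ' x) := hx
    have h2 : Ring.inverse (Ψ' x) = ((hx'.unit⁻¹ : (H →L[ℝ] H)ˣ) : H →L[ℝ] H) := by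
      conv_lhs => rw [← hx'.unit_spec]
      exact Ring.inverse_unit _
    simp only [hT, dif_pos hx']
    rw [h2]
    rfl
  have hTsymm : ∀ x ∈ U, ((T x).symm : H →L[ℝ] H) = Ψ' x := by
    intro x hx
    have hx' : IsUnit (Ψ' x) := hx
    simp only [hT, dif_pos hx']
    rfl
  refine ⟨U, hUmem, T, ?_, ?_, ?_⟩
  · apply ContinuousOn.congr (f := fun x => Ring.inverse (Ψ' x))
    · intro x hx
      have hx' : IsUnit (Ψ' x) := hx
      have h1 : ContinuousAt Ring.inverse (Ψ' x) :=
        hx'.unit_spec ▸ NormedRing.inverse_continuousAt hx'.unit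
      exact (h1.comp hΨ'cont.continuousAt).continuousWithinAt
    · exact hTcoe
  · exact (hΨ'cont.continuousOn).congr hTsymm
  · intro x hx
    have hx' : IsUnit (Ψ' x) := hx
    ext y
    constructor
    · rintro ⟨k, hk, rfl⟩
      have : Ψ' x (T x k) = k := by
        have := hTsymm x hx
        calc Ψ' x (T x k) = (T x).symm (T x k) := by rw [← this]; rfl
        _ = k := (T x).symm_apply_apply k
      have hker' : φ x (T x k) = 0 := by
        have h1 : (Ψ x₀) (Ψ' x (T x k)) = Ψ x (T x k) := by
          simp only [hΨ', ContinuousLinearMap.comp_apply]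
          exact e₀.apply_symm_apply (Ψ x (T x k))
        rw [this] at h1
        have h2 : (Ψ x₀ k).1 = 0 := hk
        have := congrArg Prod.fst h1
        simp only [hΨ, ContinuousLinearMap.prod_apply] at this
        rw [← this]
        exact h2.symm ▸ rfl
      exact hker'
    · intro hy
      refine ⟨(T x).symm y, ?_, (T x).apply_symm_apply y⟩
      have h1 : (T x).symm y = Ψ' x y := by rw [← hTsymm x hx]; rfl
      have h2 : φ x₀ (Ψ' x y) = (Ψ x y).1 := by
        have : (Ψ x₀) (Ψ' x y) = Ψ x y := by
          simp only [hΨ', ContinuousLinearMap.comp_apply]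
          exact e₀.apply_symm_apply (Ψ x y)
        exact congrArg Prod.fst this
      have : φ x₀ ((T x).symm y) = 0 := by
        rw [h1, h2]
        simpa [hΨ] using hy
      exact this
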